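/- For all positive integers n and m, the number of permutations π of {1, ..., n} whose order divides m is at most τ(m) · (n-1)!, where τ(m) is the number of positive divisors of m. -/

import Mathlib

open Function Equiv

variable {k : ℕ}

/-- cycle length of 0 -/
noncomputable def dd (π : Equiv.Perm (Fin (k+1))) : ℕ := Function.minimalPeriod ⇑π 0

/-- orbit of 0 -/
noncomputable def CC (π : Equiv.Perm (Fin (k+1))) : Finset (Fin (k+1)) :=
  Finset.image (fun i : Fin (dd π) => (⇑π)^[(i : ℕ)] 0) Finset.univ

noncomputable def RR (π : Equiv.Perm (Fin (k+1))) : Finset (Fin (k+1)) := (CC π)ᶜ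

noncomputable def sortR (π : Equiv.Perm (Fin (k+1))) : List (Fin (k+1)) := (RR π).sort (· ≤ ·)

lemma card_CC (π : Equiv.Perm (Fin (k+1))) : (CC π).card = dd π := by
  rw [CC, Finset.card_image_of_injOn, Finset.card_univ, Fintype.card_fin]
  intro i _ j _ h
  have := Function.iterate_injOn_Iio_minimalPeriod (f := ⇑π) (x := (0 : Fin (k+1)))
    (Set.mem_Iio.2 i.isLt) (Set.mem_Iio.2 j.isLt) h
  exact Fin.ext this

lemma dd_le (π : Equiv.Perm (Fin (k+1))) : dd π ≤ k + 1 := by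
  rw [← card_CC]
  simpa using Finset.card_le_univ (CC π)

lemma length_sortR (π : Equiv.Perm (Fin (k+1))) :
    (sortR π).length = k + 1 - dd π := by
  rw [sortR, Finset.length_sort, RR, Finset.card_compl, card_CC, Fintype.card_fin]

lemma mem_CC {π : Equiv.Perm (Fin (k+1))} {x : Fin (k+1)} :
    x ∈ CC π ↔ ∃ i < dd π, (⇑π)^[i] 0 = x := by
  simp only [CC, Finset.mem_image, Finset.mem_univ, true_and]
  constructor
  · rintro ⟨i, rfl⟩; exact ⟨i, i.isLt, rfl⟩
  · rintro ⟨i, hi, rfl⟩; exact ⟨⟨i, hi⟩, rfl⟩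

section
variable {m : ℕ} {π : Equiv.Perm (Fin (k+1))} (hm : 0 < m) (hπ : π ^ m = 1)

lemma isPeriodic (hm : 0 < m) (hπ : π ^ m = 1) : Function.IsPeriodicPt ⇑π m 0 := by
  unfold Function.IsPeriodicPt Function.IsFixedPt
  rw [Equiv.Perm.iterate_eq_pow, hπ]; rfl

lemma dd_pos (hm : 0 < m) (hπ : π ^ m = 1) : 0 < dd π :=
  (isPeriodic hm hπ).minimalPeriod_pos hm

lemma dd_dvd (hm : 0 < m) (hπ : π ^ m = 1) : dd π ∣ m :=
  (isPeriodic hm hπ).minimalPeriod_dvd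

lemma zero_mem_CC (hm : 0 < m) (hπ : π ^ m = 1) : (0 : Fin (k+1)) ∈ CC π :=
  mem_CC.2 ⟨0, dd_pos hm hπ, rfl⟩

lemma iter_dd (π : Equiv.Perm (Fin (k+1))) : (⇑π)^[dd π] 0 = 0 :=
  Function.iterate_minimalPeriod

lemma CC_closed (hx : x ∈ CC π) : π x ∈ CC π := by
  obtain ⟨i, hi, rfl⟩ := mem_CC.1 hx
  rw [show π ((⇑π)^[i] 0) = (⇑π)^[i+1] 0 from (Function.iterate_succ_apply' ⇑π i 0).symm]
  rcases Nat.lt_or_ge (i+1) (dd π) with h | h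
  · exact mem_CC.2 ⟨i+1, h, rfl⟩
  · have : i + 1 = dd π := le_antisymm hi h
    rw [this, iter_dd]
    exact mem_CC.2 ⟨0, lt_of_le_of_lt (Nat.zero_le i) hi, rfl⟩

lemma RR_closed (hm : 0 < m) (hπ : π ^ m = 1) {x : Fin (k+1)} (hx : x ∈ RR π) :
    π x ∈ RR π := by
  rw [RR, Finset.mem_compl] at hx ⊢
  intro hc
  apply hx
  obtain ⟨i, hi, hix⟩ := mem_CC.1 hc
  rcases Nat.eq_zero_or_pos i with rfl | hip
  · have : π ((⇑π)^[dd π - 1] 0) = π x := by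
      rw [show π ((⇑π)^[dd π - 1] 0) = (⇑π)^[dd π - 1 + 1] 0 from
        (Function.iterate_succ_apply' ⇑π _ 0).symm,
        Nat.sub_add_cancel (dd_pos hm hπ), iter_dd]
      exact hix
    have := π.injective this
    exact mem_CC.2 ⟨dd π - 1, by have := dd_pos hm hπ; omega, this⟩
  · have : π ((⇑π)^[i - 1] 0) = π x := by
      rw [show π ((⇑π)^[i - 1] 0) = (⇑π)^[i - 1 + 1] 0 from
        (Function.iterate_succ_apply' ⇑π _ 0).symm, Nat.sub_add_cancel hip]
      exact hix
    exact mem_CC.2 ⟨i - 1, by omega, π.injective this⟩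

end

noncomputable def gg (π : Equiv.Perm (Fin (k+1))) : Fin k → Fin (k+1) := fun i =>
  if h : (i : ℕ) + 1 < dd π then (⇑π)^[(i : ℕ) + 1] 0
  else π ((sortR π).get ⟨(i : ℕ) + 1 - dd π, by
    have h1 := length_sortR π
    have h2 := i.isLt
    have h3 := dd_le π
    omega⟩)

section
variable {m : ℕ} {π : Equiv.Perm (Fin (k+1))}

lemma sortR_get_mem (π : Equiv.Perm (Fin (k+1))) (j : Fin (sortR π).length) :
    (sortR π).get j ∈ RR π := by
  have : (sortR π).get j ∈ sortR π := List.get_mem _ j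
  exact (Finset.mem_sort (α := Fin (k+1)) (· ≤ ·)).1 this

lemma pi_ne_zero (hm : 0 < m) (hπ : π ^ m = 1) {x : Fin (k+1)} (hx : x ∈ RR π) :
    π x ≠ 0 := by
  intro hc
  have hmem := RR_closed hm hπ hx
  rw [hc, RR, Finset.mem_compl] at hmem
  exact hmem (zero_mem_CC hm hπ)

lemma gg_ne_zero (hm : 0 < m) (hπ : π ^ m = 1) (i : Fin k) : gg π i ≠ 0 := by
  rw [gg]
  split_ifs with h
  · intro hc
    have := Function.iterate_injOn_Iio_minimalPeriod (f := ⇑π) (x := (0 : Fin (k+1)))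
      (Set.mem_Iio.2 h) (Set.mem_Iio.2 (dd_pos hm hπ)) (by simpa using hc)
    omega
  · exact fun hc => pi_ne_zero hm hπ (sortR_get_mem π _) hc

lemma gg_mem_CC (hm : 0 < m) (hπ : π ^ m = 1) (i : Fin k) (h : (i : ℕ) + 1 < dd π) :
    gg π i ∈ CC π := by
  rw [gg, dif_pos h]
  exact mem_CC.2 ⟨(i : ℕ) + 1, h, rfl⟩

lemma gg_mem_RR (hm : 0 < m) (hπ : π ^ m = 1) (i : Fin k) (h : ¬ ((i : ℕ) + 1 < dd π)) :
    gg π i ∈ RR π := by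
  rw [gg, dif_neg h]
  exact RR_closed hm hπ (sortR_get_mem π _)

lemma gg_injective (hm : 0 < m) (hπ : π ^ m = 1) : Function.Injective (gg π) := by
  intro i j hij
  by_cases hi : (i : ℕ) + 1 < dd π <;> by_cases hj : (j : ℕ) + 1 < dd π
  · rw [gg, dif_pos hi] at hij
    rw [gg, dif_pos hj] at hij
    have := Function.iterate_injOn_Iio_minimalPeriod (f := ⇑π) (x := (0 : Fin (k+1)))
      (Set.mem_Iio.2 hi) (Set.mem_Iio.2 hj) hij
    exact Fin.ext (by omega)
  · have h1 := gg_mem_CC hm hπ i hi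
    have h2 := gg_mem_RR hm hπ j hj
    rw [hij, RR, Finset.mem_compl] at *
    exact absurd h1 h2
  · have h1 := gg_mem_CC hm hπ j hj
    have h2 := gg_mem_RR hm hπ i hi
    rw [← hij, RR, Finset.mem_compl] at *
    exact absurd h1 h2
  · rw [gg, dif_neg hi] at hij
    rw [gg, dif_neg hj] at hij
    have hnd : (sortR π).Nodup := Finset.sort_nodup _ _
    have := (List.Nodup.get_inj_iff hnd).1 (π.injective hij)
    have : (i : ℕ) + 1 - dd π = (j : ℕ) + 1 - dd π := congrArg Fin.val this
    exact Fin.ext (by omega)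

end

section
variable {m : ℕ} {π : Equiv.Perm (Fin (k+1))}

lemma gg_eq_lt (i : Fin k) (h : (i : ℕ) + 1 < dd π) :
    gg π i = (⇑π)^[(i : ℕ) + 1] 0 := by rw [gg, dif_pos h]

lemma gg_eq_ge (i : Fin k) (h : ¬ ((i : ℕ) + 1 < dd π))
    (hj : (i : ℕ) + 1 - dd π < (sortR π).length) :
    gg π i = π ((sortR π).get ⟨(i : ℕ) + 1 - dd π, hj⟩) := by rw [gg, dif_neg h]

lemma key (hm : 0 < m) {π π' : Equiv.Perm (Fin (k+1))} (hπ : π ^ m = 1) (hπ' : π' ^ m = 1)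
    (hd : dd π = dd π') (hg : ∀ i : Fin k, gg π i = gg π' i) : π = π' := by
  have hdle := dd_le π
  have hd1 : 0 < dd π := dd_pos hm hπ
  have hlen := length_sortR π
  have hlen' := length_sortR π'
  have step1 : ∀ j, 1 ≤ j → j < dd π → (⇑π)^[j] 0 = (⇑π')^[j] 0 := by
    intro j h1 h2
    have hjk : j - 1 < k := by omega
    have hco : ((⟨j - 1, hjk⟩ : Fin k) : ℕ) + 1 = j := by simp; omega
    have e1 := gg_eq_lt (π := π) ⟨j - 1, hjk⟩ (by rw [hco]; exact h2)
    have e2 := gg_eq_lt (π := π') ⟨j - 1, hjk⟩ (by rw [← hd]; exact hco.trans_lt h2)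
    rw [hco] at e1 e2
    rw [← e1, ← e2, hg]
  have step1' : ∀ j, j < dd π → (⇑π)^[j] 0 = (⇑π')^[j] 0 := by
    intro j hj
    rcases Nat.eq_zero_or_pos j with rfl | hjp
    · rfl
    · exact step1 j hjp hj
  have step2 : CC π = CC π' := by
    apply Finset.ext
    intro x
    rw [mem_CC, mem_CC, ← hd]
    constructor
    · rintro ⟨i, hi, rfl⟩; exact ⟨i, hi, (step1' i hi).symm⟩
    · rintro ⟨i, hi, rfl⟩; exact ⟨i, hi, step1' i hi⟩
  have step3 : sortR π = sortR π' := by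
    show ((CC π)ᶜ).sort (· ≤ ·) = ((CC π')ᶜ).sort (· ≤ ·)
    rw [step2]
  apply Equiv.ext
  intro x
  by_cases hx : x ∈ CC π
  · obtain ⟨j, hj, rfl⟩ := mem_CC.1 hx
    have hπx : π ((⇑π)^[j] 0) = (⇑π)^[j + 1] 0 := (Function.iterate_succ_apply' ⇑π j 0).symm
    have hπx' : π' ((⇑π')^[j] 0) = (⇑π')^[j + 1] 0 := (Function.iterate_succ_apply' ⇑π' j 0).symm
    rcases Nat.lt_or_ge (j + 1) (dd π) with hlt | hge
    · rw [hπx, step1 (j + 1) (by omega) hlt, step1' j hj, hπx']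
    · have hj1 : j + 1 = dd π := by omega
      rw [hπx, hj1, iter_dd, step1' j hj, hπx', hj1, hd, iter_dd]
  · have hxR : x ∈ RR π := by rw [RR, Finset.mem_compl]; exact hx
    have hxs : x ∈ sortR π := (Finset.mem_sort (α := Fin (k+1)) (· ≤ ·)).2 hxR
    obtain ⟨⟨j, hjl⟩, hget⟩ := List.mem_iff_get.1 hxs
    have hik : dd π - 1 + j < k := by omega
    set i : Fin k := ⟨dd π - 1 + j, hik⟩ with hi
    have hival : (i : ℕ) = dd π - 1 + j := rfl
    have hcond : ¬ ((i : ℕ) + 1 < dd π) := by omega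
    have hidx : (i : ℕ) + 1 - dd π = j := by omega
    have hjl' : j < (sortR π').length := by rw [← step3]; exact hjl
    have egets : ∀ (h1 : j < (sortR π).length) (h2 : j < (sortR π').length),
        (sortR π).get ⟨j, h1⟩ = (sortR π').get ⟨j, h2⟩ := by
      rw [step3]; intro h1 h2; rfl
    have e1 : gg π i = π ((sortR π).get ⟨j, hjl⟩) := by
      rw [gg_eq_ge i hcond (by omega)]
      exact congrArg _ (congrArg _ (Fin.ext hidx))
    have e2 : gg π' i = π' ((sortR π').get ⟨j, hjl'⟩) := by
      rw [gg_eq_ge i (by rw [← hd]; exact hcond) (by rw [hlen', ← hd]; omega)]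
      exact congrArg _ (congrArg _ (Fin.ext (show (i : ℕ) + 1 - dd π' = j from by rw [← hd]; exact hidx)))
    rw [← hget, ← e1, hg, e2, egets hjl hjl']
end

lemma aux (k m : ℕ) (hm : 0 < m) :
    Nat.card {π : Equiv.Perm (Fin (k+1)) // orderOf π ∣ m} ≤
      m.divisors.card * Nat.factorial k := by
  classical
  set T := {d // d ∈ m.divisors} × (Fin k ↪ {x : Fin (k+1) // x ≠ 0}) with hT
  have hpow : ∀ π : Equiv.Perm (Fin (k+1)), orderOf π ∣ m → π ^ m = 1 := fun π h =>
    orderOf_dvd_iff_pow_eq_one.1 h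
  let F : {π : Equiv.Perm (Fin (k+1)) // orderOf π ∣ m} → T := fun p =>
    (⟨dd p.1, Nat.mem_divisors.2 ⟨dd_dvd hm (hpow p.1 p.2), hm.ne'⟩⟩,
     ⟨fun i => ⟨gg p.1 i, gg_ne_zero hm (hpow p.1 p.2) i⟩,
      fun a b hab => gg_injective hm (hpow p.1 p.2) (Subtype.ext_iff.1 hab)⟩)
  have Finj : Function.Injective F := by
    rintro ⟨π, h⟩ ⟨π', h'⟩ heq
    have h1 : dd π = dd π' := Subtype.ext_iff.1 (congrArg Prod.fst heq)
    have h2 : ∀ i : Fin k, gg π i = gg π' i := by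
      intro i
      have := congrArg Prod.snd heq
      have := DFunLike.ext_iff.1 this i
      exact Subtype.ext_iff.1 this
    exact Subtype.ext (key hm (hpow π h) (hpow π' h') h1 h2)
  calc Nat.card {π : Equiv.Perm (Fin (k+1)) // orderOf π ∣ m}
      ≤ Nat.card T := Nat.card_le_card_of_injective F Finj
    _ = m.divisors.card * Nat.factorial k := by
        rw [hT, Nat.card_prod, Nat.card_eq_fintype_card, Nat.card_eq_fintype_card,
          Fintype.card_coe, Fintype.card_embedding_eq]
        congr 1
        have hsub : Fintype.card {x : Fin (k+1) // x ≠ 0} = k := by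
          rw [Fintype.card_subtype_compl, Fintype.card_subtype_eq, Fintype.card_fin]
          omega
        rw [hsub, Fintype.card_fin, Nat.descFactorial_self]

theorem stmt_2 (n m : ℕ) (hn : 0 < n) (hm : 0 < m) :
    Nat.card {π : Equiv.Perm (Fin n) // orderOf π ∣ m} ≤
      m.divisors.card * Nat.factorial (n - 1) := by
  obtain ⟨k, rfl⟩ : ∃ k, n = k + 1 := ⟨n - 1, by omega⟩
  simpa using aux k m hm
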